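/- Let (Ω, 𝒜, P) be a probability space, let ℱ⁻ ⊆ 𝒜 be a sub-σ-algebra, and let (𝒢_m)_{m∈ℕ} be an increasing sequence of sub-σ-algebras of 𝒜. Let A ∈ σ(ℱ⁻ ∪ ⋃_{m∈ℕ} 𝒢_m) and suppose that for every m ∈ ℕ, E[1_A | σ(ℱ⁻ ∪ 𝒢_m)] = E[1_A | ℱ⁻] almost surely. Then 1_A = E[1_A | ℱ⁻] almost surely; in particular, A coincides up to a P-null set with an ℱ⁻-measurable set. -/

import Mathlib

open MeasureTheory Filter Set Topology
open scoped ENNReal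

noncomputable section

/-- A generalised Kolmogorov zero–one argument: if `A` is measurable with
respect to `σ(ℱ⁻ ∪ ⋃ₘ 𝒢ₘ)` and conditioning on `σ(ℱ⁻ ∪ 𝒢ₘ)` gives no more information
about `A` than conditioning on `ℱ⁻`, then `1_A` equals `E[1_A | ℱ⁻]` almost surely; in
particular, `A` agrees with an `ℱ⁻`-measurable set up to a null set. -/
theorem statement_11 {Ω : Type*} {𝒜 : MeasurableSpace Ω}
    (P : Measure Ω) [IsProbabilityMeasure P]
    (Fm : MeasurableSpace Ω) (hFm : Fm ≤ 𝒜)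
    (G : ℕ → MeasurableSpace Ω) (hG : ∀ m, G m ≤ 𝒜) (hGmono : Monotone G)
    (A : Set Ω) (hA : MeasurableSet[Fm ⊔ ⨆ m, G m] A)
    (hcond : ∀ m : ℕ,
      P[A.indicator (fun _ => (1 : ℝ)) | Fm ⊔ G m]
        =ᵐ[P] P[A.indicator (fun _ => (1 : ℝ)) | Fm]) :
    A.indicator (fun _ => (1 : ℝ)) =ᵐ[P] P[A.indicator (fun _ => (1 : ℝ)) | Fm] ∧
    ∃ B : Set Ω, MeasurableSet[Fm] B ∧ P ((A \ B) ∪ (B \ A)) = 0 := by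
  letI : MeasurableSpace Ω := 𝒜
  set g : Ω → ℝ := A.indicator (fun _ => 1) with hgdef
  have hsuple : Fm ⊔ ⨆ m, G m ≤ 𝒜 := sup_le hFm (iSup_le hG)
  have hAmeas : MeasurableSet[𝒜] A := hsuple _ hA
  have hgint : Integrable g P := ((integrable_const (1 : ℝ)).indicator hAmeas)
  let ℱ : Filtration ℕ 𝒜 :=
    { seq := fun n => Fm ⊔ G n
      mono' := fun n m h => sup_le_sup_left (hGmono h) _
      le' := fun n => sup_le hFm (hG n) }
  have hsupeq : (⨆ n, ℱ n) = Fm ⊔ ⨆ m, G m := by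
    apply le_antisymm
    · exact iSup_le fun n => sup_le le_sup_left (le_sup_of_le_right (le_iSup G n))
    · refine sup_le (le_trans le_sup_left (le_iSup (fun n => ℱ n) 0)) (iSup_le fun m =>
        le_trans (le_sup_right : G m ≤ Fm ⊔ G m) (le_iSup (fun n => ℱ n) m))
  have hgsm : StronglyMeasurable[⨆ n, ℱ n] g := by
    rw [hsupeq]
    exact stronglyMeasurable_const.indicator hA
  have htend := hgint.tendsto_ae_condExp hgsm
  have hconst : ∀ᵐ x ∂P, ∀ n, (P[g|ℱ n]) x = (P[g|Fm]) x :=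
    ae_all_iff.2 fun n => hcond n
  have h1 : g =ᵐ[P] P[g|Fm] := by
    filter_upwards [htend, hconst] with x hx hx2
    have h' : Tendsto (fun _ : ℕ => (P[g|Fm]) x) atTop (𝓝 (g x)) := by
      refine hx.congr fun n => ?_
      exact hx2 n
    exact tendsto_nhds_unique h' tendsto_const_nhds
  refine ⟨h1, (P[g|Fm]) ⁻¹' {1}, (stronglyMeasurable_condExp.measurable)
    (measurableSet_singleton (1 : ℝ)), ?_⟩
  refine measure_mono_null (fun x hx => ?_) (ae_iff.1 h1)
  simp only [mem_setOf_eq]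
  rcases hx with hx | hx
  · have hgx : g x = 1 := indicator_of_mem hx.1 _
    intro h
    exact hx.2 (by simpa [hgx] using h.symm)
  · have hgx : g x = 0 := indicator_of_notMem hx.2 _
    have hfx : (P[g|Fm]) x = 1 := hx.1
    intro h
    rw [hgx, hfx] at h
    exact zero_ne_one h

end
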